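/- arXiv:1409.1176 — 2 statements merged into one kernel-verified Lean document; each statement's English description precedes it below -/
import Mathlib

section
/- Let n ≥ 1 and let M be an n×n complex matrix. The following are equivalent: (1) M is a symmetric Hadamard matrix in dephased form and there exist permutations σ, ρ of ℤ/nℤ with M = P_σᵀ · F_n · P_ρ; (2) there exist a permutation τ of ℤ/nℤ with τ(0) = 0 and a unit m of ℤ/nℤ such that M = P_τᵀ · F_n · P_{(·m)} · P_τ. -/
open Matrix Complex

/-- The `n × n` Fourier matrix, with entries `F[j,k] = exp(2πi·jk/n)/√n`. -/
noncomputable def Fourier (n : ℕ) : Matrix (ZMod n) (ZMod n) ℂ :=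
  Matrix.of fun j k =>
    ((1 / Real.sqrt n : ℝ) : ℂ) *
      Complex.exp (2 * Real.pi * Complex.I * ((j.val : ℂ) * (k.val : ℂ)) / (n : ℂ))

/-- The permutation matrix of a map `σ`: `P[j,k] = 1` if `j = σ k`, else `0`. -/
def permMat {n : ℕ} (σ : ZMod n → ZMod n) : Matrix (ZMod n) (ZMod n) ℂ :=
  Matrix.of fun j k => if j = σ k then 1 else 0

/-- An `n × n` complex Hadamard matrix: unitary with all entries of absolute value `1/√n`. -/
def IsHadamard (n : ℕ) (H : Matrix (ZMod n) (ZMod n) ℂ) [NeZero n] : Prop :=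
  H * Hᴴ = 1 ∧ Hᴴ * H = 1 ∧ ∀ i j, ‖H i j‖ = 1 / Real.sqrt n

/-- Dephased form: all entries of the 0th row and 0th column equal `1/√n`. -/
def IsDephased (n : ℕ) (H : Matrix (ZMod n) (ZMod n) ℂ) : Prop :=
  (∀ j, H 0 j = ((1 / Real.sqrt n : ℝ) : ℂ)) ∧ (∀ i, H i 0 = ((1 / Real.sqrt n : ℝ) : ℂ))

namespace SPFaux

variable {n : ℕ} [NeZero n]

noncomputable def zeta (n : ℕ) : ℂ := Complex.exp (2 * Real.pi * Complex.I / n)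

noncomputable def e (n : ℕ) (x : ZMod n) : ℂ := zeta n ^ x.val

lemma npos : 0 < n := Nat.pos_of_ne_zero (NeZero.ne n)

lemma ncast_ne : (n : ℂ) ≠ 0 := Nat.cast_ne_zero.2 (NeZero.ne n)

lemma zeta_pow_n : zeta n ^ n = 1 := by
  rw [zeta, ← Complex.exp_nat_mul]
  rw [show (n : ℂ) * (2 * Real.pi * Complex.I / n) = 2 * Real.pi * Complex.I by
    rw [← mul_div_assoc]; exact mul_div_cancel_left₀ _ ncast_ne]
  exact Complex.exp_two_pi_mul_I

lemma zeta_prim : IsPrimitiveRoot (zeta n) n :=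
  Complex.isPrimitiveRoot_exp n (NeZero.ne n)

lemma e_natCast (a : ℕ) : e n (a : ZMod n) = zeta n ^ a := by
  rw [e, ZMod.val_natCast]
  conv_rhs => rw [← Nat.div_add_mod a n]
  rw [pow_add, pow_mul, zeta_pow_n, one_pow, one_mul]

lemma e_zero : e n 0 = 1 := by
  simp [e]

lemma e_add (x y : ZMod n) : e n (x + y) = e n x * e n y := by
  have h : ((x.val + y.val : ℕ) : ZMod n) = x + y := by
    push_cast
    rw [ZMod.natCast_zmod_val, ZMod.natCast_zmod_val]
  rw [← h, e_natCast, pow_add]; rfl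

lemma e_mul (x y : ZMod n) : e n (x * y) = zeta n ^ (x.val * y.val) := by
  have h : ((x.val * y.val : ℕ) : ZMod n) = x * y := by
    push_cast
    rw [ZMod.natCast_zmod_val, ZMod.natCast_zmod_val]
  rw [← h, e_natCast]

lemma Fourier_apply (j k : ZMod n) :
    Fourier n j k = ((1 / Real.sqrt n : ℝ) : ℂ) * e n (j * k) := by
  rw [Fourier, Matrix.of_apply, e_mul, zeta, ← Complex.exp_nat_mul]
  congr 2
  push_cast
  ring

lemma abs_e (x : ZMod n) : ‖e n x‖ = 1 := by
  rw [e, norm_pow, zeta,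
    show (2 * (Real.pi:ℂ) * Complex.I / n) = ((2 * Real.pi / n : ℝ) : ℂ) * Complex.I by
      push_cast; ring,
    Complex.norm_exp_ofReal_mul_I, one_pow]

lemma e_ne_zero (x : ZMod n) : e n x ≠ 0 := by
  intro h
  have := abs_e (n := n) x
  rw [h] at this
  simp at this

lemma e_inj : Function.Injective (e n) := by
  intro x y h
  exact ZMod.val_injective n (zeta_prim.pow_inj x.val_lt y.val_lt h)

lemma conj_e (x : ZMod n) : (starRingEnd ℂ) (e n x) = e n (-x) := by
  have hne : e n x ≠ 0 := e_ne_zero x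
  refine mul_right_cancel₀ hne ?_
  rw [mul_comm ((starRingEnd ℂ) (e n x)), Complex.mul_conj, Complex.normSq_eq_norm_sq, abs_e,
    ← e_add, neg_add_cancel, e_zero]
  norm_num

lemma sum_e (x : ZMod n) : ∑ a : ZMod n, e n (a * x) = if x = 0 then (n : ℂ) else 0 := by
  have hterm : ∀ a : ZMod n, e n (a * x) = e n x ^ a.val := by
    intro a
    rw [e_mul, mul_comm a.val, pow_mul]
    rfl
  have hsum : ∑ a : ZMod n, e n (a * x) = ∑ i ∈ Finset.range n, e n x ^ i := by
    simp_rw [hterm]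
    refine Finset.sum_nbij' (fun a => a.val) (fun i => (i : ZMod n)) ?_ ?_ ?_ ?_ ?_
    · intro a _; exact Finset.mem_range.2 a.val_lt
    · intro i _; exact Finset.mem_univ _
    · intro a _; exact ZMod.natCast_zmod_val a
    · intro i hi; exact ZMod.val_natCast_of_lt (Finset.mem_range.1 hi)
    · intro a _; rfl
  split_ifs with h
  · subst h
    simp only [mul_zero, e_zero]
    simp [Finset.card_univ, ZMod.card]
  · have hw : e n x ≠ 1 := by
      intro h1
      exact h (e_inj (h1.trans e_zero.symm))
    have hwn : e n x ^ n = 1 := by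
      rw [e, ← pow_mul, mul_comm, pow_mul, zeta_pow_n, one_pow]
    rw [hsum, geom_sum_eq hw, hwn, sub_self, zero_div]

lemma c_ne_zero : ((1 / Real.sqrt n : ℝ) : ℂ) ≠ 0 := by
  have : (0:ℝ) < Real.sqrt n := Real.sqrt_pos.2 (by exact_mod_cast npos (n := n))
  exact_mod_cast one_div_ne_zero this.ne'

lemma csq : ((1 / Real.sqrt n : ℝ) : ℂ) * ((1 / Real.sqrt n : ℝ) : ℂ) * n = 1 := by
  have h : (0:ℝ) < n := by exact_mod_cast npos (n := n)
  have : ((1 / Real.sqrt n : ℝ) * (1 / Real.sqrt n : ℝ) * n : ℝ) = 1 := by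
    rw [div_mul_div_comm, one_mul, Real.mul_self_sqrt h.le]
    field_simp
  calc ((1 / Real.sqrt n : ℝ) : ℂ) * ((1 / Real.sqrt n : ℝ) : ℂ) * n
      = (((1 / Real.sqrt n : ℝ) * (1 / Real.sqrt n : ℝ) * n : ℝ) : ℂ) := by push_cast; ring
    _ = 1 := by rw [this]; norm_num

lemma mul_permMat (A : Matrix (ZMod n) (ZMod n) ℂ) (f : ZMod n → ZMod n) (j k : ZMod n) :
    (A * permMat f) j k = A j (f k) := by
  simp [Matrix.mul_apply, permMat]

lemma permMatT_mul (A : Matrix (ZMod n) (ZMod n) ℂ) (f : ZMod n → ZMod n) (j k : ZMod n) :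
    ((permMat f)ᵀ * A) j k = A (f j) k := by
  simp [Matrix.mul_apply, permMat, Matrix.transpose_apply]

lemma triple_apply (σ ρ : ZMod n → ZMod n) (j k : ZMod n) :
    ((permMat σ)ᵀ * Fourier n * permMat ρ) j k = Fourier n (σ j) (ρ k) := by
  rw [mul_permMat, permMatT_mul]

lemma quad_apply (τ g f : ZMod n → ZMod n) (j k : ZMod n) :
    ((permMat τ)ᵀ * Fourier n * permMat g * permMat f) j k = Fourier n (τ j) (g (f k)) := by
  rw [mul_permMat, mul_permMat, permMatT_mul]

lemma FFH : Fourier n * (Fourier n)ᴴ = 1 := by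
  ext j k
  rw [Matrix.mul_apply, Matrix.one_apply]
  simp_rw [Matrix.conjTranspose_apply, Fourier_apply, star_mul', RCLike.star_def, conj_e, Complex.conj_ofReal]
  have hterm : ∀ a : ZMod n,
      ((1 / Real.sqrt n : ℝ) : ℂ) * e n (j * a) *
        (((1 / Real.sqrt n : ℝ) : ℂ) * e n (-(k * a))) =
      ((1 / Real.sqrt n : ℝ) : ℂ) * ((1 / Real.sqrt n : ℝ) : ℂ) * e n (a * (j - k)) := by
    intro a
    rw [mul_mul_mul_comm, ← e_add, show j * a + -(k * a) = a * (j - k) from by ring]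
  simp_rw [hterm]
  rw [← Finset.mul_sum, sum_e]
  split_ifs with h1 h2 h2
  · exact csq
  · exact absurd (sub_eq_zero.mp h1) h2
  · exact absurd (sub_eq_zero.mpr h2) h1
  · rw [mul_zero]

lemma FHF : (Fourier n)ᴴ * Fourier n = 1 := by
  ext j k
  rw [Matrix.mul_apply, Matrix.one_apply]
  simp_rw [Matrix.conjTranspose_apply, Fourier_apply, star_mul', RCLike.star_def, conj_e, Complex.conj_ofReal]
  have hterm : ∀ a : ZMod n,
      ((1 / Real.sqrt n : ℝ) : ℂ) * e n (-(a * j)) *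
        (((1 / Real.sqrt n : ℝ) : ℂ) * e n (a * k)) =
      ((1 / Real.sqrt n : ℝ) : ℂ) * ((1 / Real.sqrt n : ℝ) : ℂ) * e n (a * (k - j)) := by
    intro a
    rw [mul_mul_mul_comm, ← e_add, show -(a * j) + a * k = a * (k - j) from by ring]
  simp_rw [hterm]
  rw [← Finset.mul_sum, sum_e]
  split_ifs with h1 h2 h2
  · exact csq
  · exact absurd (sub_eq_zero.mp h1).symm h2
  · exact absurd (sub_eq_zero.mpr h2.symm) h1
  · rw [mul_zero]

/-- Multiplication by a unit is a permutation. -/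
def mulUnitPerm (m : (ZMod n)ˣ) : Equiv.Perm (ZMod n) where
  toFun x := (m : ZMod n) * x
  invFun x := ((m⁻¹ : (ZMod n)ˣ) : ZMod n) * x
  left_inv x := by
    show ((m⁻¹ : (ZMod n)ˣ) : ZMod n) * ((m : ZMod n) * x) = x
    rw [← mul_assoc, Units.inv_mul, one_mul]
  right_inv x := by
    show (m : ZMod n) * (((m⁻¹ : (ZMod n)ˣ) : ZMod n) * x) = x
    rw [← mul_assoc, Units.mul_inv, one_mul]

@[simp] lemma mulUnitPerm_apply (m : (ZMod n)ˣ) (x : ZMod n) :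
    mulUnitPerm m x = (m : ZMod n) * x := rfl

end SPFaux

open SPFaux

theorem symmetric_perm_fourier_characterization
    (n : ℕ) [NeZero n] (M : Matrix (ZMod n) (ZMod n) ℂ) :
    (IsHadamard n M ∧ IsDephased n M ∧ M = Mᵀ ∧
      ∃ σ ρ : Equiv.Perm (ZMod n), M = (permMat σ)ᵀ * Fourier n * permMat ρ) ↔
    (∃ τ : Equiv.Perm (ZMod n), τ 0 = 0 ∧ ∃ m : (ZMod n)ˣ,
      M = (permMat τ)ᵀ * Fourier n * (permMat fun k => (m : ZMod n) * k) * permMat τ) := by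
  set c : ℂ := ((1 / Real.sqrt n : ℝ) : ℂ) with hc_def
  have hc : c ≠ 0 := c_ne_zero
  constructor
  · rintro ⟨hH, hD, hS, σ, ρ, hM⟩
    have hMentry : ∀ j k, M j k = c * e n (σ j * ρ k) := by
      intro j k
      rw [hM, triple_apply, Fourier_apply]
    have key0 : ∀ k, σ 0 * ρ k = 0 := by
      intro k
      have h := hD.1 k
      rw [hMentry] at h
      have h1 : e n (σ 0 * ρ k) = e n 0 := by
        rw [e_zero]
        exact mul_left_cancel₀ hc (h.trans (mul_one c).symm)
      exact e_inj h1
    have hσ0 : σ 0 = 0 := by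
      have := key0 (ρ.symm 1)
      simpa using this
    have keyρ : ∀ j, σ j * ρ 0 = 0 := by
      intro j
      have h := hD.2 j
      rw [hMentry] at h
      have h1 : e n (σ j * ρ 0) = e n 0 := by
        rw [e_zero]
        exact mul_left_cancel₀ hc (h.trans (mul_one c).symm)
      exact e_inj h1
    have hρ0 : ρ 0 = 0 := by
      have := keyρ (σ.symm 1)
      simpa using this
    have hsym : ∀ j k, σ j * ρ k = σ k * ρ j := by
      intro j k
      have h : M j k = M k j := by
        have h2 := congrFun (congrFun hS j) k
        rwa [Matrix.transpose_apply] at h2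
      rw [hMentry, hMentry] at h
      exact e_inj (mul_left_cancel₀ hc h)
    set a : ZMod n := σ (ρ.symm 1) with ha_def
    have hσ : ∀ j, σ j = a * ρ j := by
      intro j
      have := hsym j (ρ.symm 1)
      simpa [ha_def] using this
    have ha : IsUnit a := by
      obtain ⟨j, hj⟩ := σ.surjective 1
      exact IsUnit.of_mul_eq_one (a := a) (ρ j) (by rw [← hσ, hj])
    refine ⟨ρ, hρ0, ha.unit, ?_⟩
    ext j k
    rw [hMentry, quad_apply, Fourier_apply,
      show σ j * ρ k = ρ j * ((ha.unit : ZMod n) * ρ k) from by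
        rw [hσ j, ha.unit_spec]; ring]
  · rintro ⟨τ, hτ0, m, hM⟩
    have hMentry : ∀ j k, M j k = c * e n (τ j * ((m : ZMod n) * τ k)) := by
      intro j k
      rw [hM, quad_apply, Fourier_apply]
    have hMsub : M = (Fourier n).submatrix τ (τ.trans (mulUnitPerm m)) := by
      ext j k
      rw [hM, quad_apply]
      rfl
    refine ⟨⟨?_, ?_, ?_⟩, ⟨?_, ?_⟩, ?_, τ, τ.trans (mulUnitPerm m), ?_⟩
    · rw [hMsub, Matrix.conjTranspose_submatrix, Matrix.submatrix_mul_equiv, FFH,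
        Matrix.submatrix_one_equiv]
    · rw [hMsub, Matrix.conjTranspose_submatrix, Matrix.submatrix_mul_equiv, FHF,
        Matrix.submatrix_one_equiv]
    · intro i j
      rw [hMentry, norm_mul, abs_e, mul_one, hc_def, Complex.norm_real, Real.norm_eq_abs,
        _root_.abs_of_nonneg (by positivity)]
    · intro j
      rw [hMentry, hτ0, zero_mul, e_zero, mul_one]
    · intro i
      rw [hMentry, hτ0, mul_zero, mul_zero, e_zero, mul_one]
    · ext j k
      rw [Matrix.transpose_apply, hMentry, hMentry,
        show τ j * ((m : ZMod n) * τ k) = τ k * ((m : ZMod n) * τ j) from by ring]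
    · ext j k
      rw [hM, quad_apply, triple_apply]
      rfl
end

section
/- Let n ≥ 1 and let M be an n×n symmetric complex Hadamard matrix in dephased form such that M = P_σᵀ · F_n · P_ρ for some permutations σ, ρ of ℤ/nℤ. Then there exists a unit m of ℤ/nℤ such that M is spectrally equivalent to F_n · P_{(·m)}, i.e. the characteristic polynomial of M equals the characteristic polynomial of F_n · P_{(·m)}. -/
open Matrix Complex

section Aux

variable {n : ℕ} [NeZero n]

lemma permMat_mul (σ τ : ZMod n → ZMod n) :
    permMat σ * permMat τ = permMat (σ ∘ τ) := by
  ext j k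
  simp [permMat, Matrix.mul_apply, Function.comp, ite_and]

lemma permMat_id : permMat (id : ZMod n → ZMod n) = 1 := by
  ext j k
  simp [permMat, Matrix.one_apply]

lemma permMat_transpose (σ : Equiv.Perm (ZMod n)) :
    (permMat ⇑σ)ᵀ = permMat ⇑σ⁻¹ := by
  ext j k
  have h : (k = σ j) ↔ (j = σ⁻¹ k) := by constructor <;> (rintro rfl; simp)
  simp [permMat, Matrix.transpose_apply, h]

lemma conj_apply (A : Matrix (ZMod n) (ZMod n) ℂ) (σ ρ : ZMod n → ZMod n) (j k : ZMod n) :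
    ((permMat σ)ᵀ * A * permMat ρ) j k = A (σ j) (ρ k) := by
  simp [permMat, Matrix.mul_apply, Matrix.transpose_apply]

lemma my_charpoly_conj {N : Type*} [Fintype N] [DecidableEq N] {R : Type*} [CommRing R]
    (Q Q' A : Matrix N N R) (h1 : Q' * Q = 1) (h2 : Q * Q' = 1) :
    (Q' * A * Q).charpoly = A.charpoly := by
  have hcomm : ∀ B : Matrix N N (Polynomial R),
      B * Matrix.scalar N (Polynomial.X : Polynomial R)
        = Matrix.scalar N (Polynomial.X : Polynomial R) * B := by
    intro B
    exact (Matrix.scalar_commute _ (fun r => Commute.all _ _) B).symm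
  have hc : charmatrix (Q' * A * Q)
      = Q'.map Polynomial.C * charmatrix A * Q.map Polynomial.C := by
    unfold charmatrix
    simp only [RingHom.mapMatrix_apply]
    rw [Matrix.mul_sub, Matrix.sub_mul, ← Matrix.map_mul, ← Matrix.map_mul]
    congr 1
    rw [hcomm, Matrix.mul_assoc, ← Matrix.map_mul, h1, Matrix.map_one _ (map_zero _) (map_one _),
      Matrix.mul_one]
  unfold Matrix.charpoly
  rw [hc, Matrix.det_mul, Matrix.det_mul]
  have hQQ : Q'.map Polynomial.C * Q.map Polynomial.C = 1 := by
    rw [← Matrix.map_mul, h1, Matrix.map_one _ (map_zero _) (map_one _)]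
  have hdet : (Q'.map Polynomial.C).det * (Q.map Polynomial.C).det = 1 := by
    rw [← Matrix.det_mul, hQQ, Matrix.det_one]
  calc (Q'.map Polynomial.C).det * (charmatrix A).det * (Q.map Polynomial.C).det
      = ((Q'.map Polynomial.C).det * (Q.map Polynomial.C).det) * (charmatrix A).det := by ring
    _ = (charmatrix A).det := by rw [hdet, one_mul]

lemma hn0 : (n : ℂ) ≠ 0 := Nat.cast_ne_zero.mpr (NeZero.ne n)

lemma exp_mod (a : ℕ) :
    Complex.exp (2 * Real.pi * Complex.I * (a : ℂ) / n)
      = Complex.exp (2 * Real.pi * Complex.I * (((a : ZMod n).val : ℕ) : ℂ) / n) := by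
  have hv : (a : ZMod n).val = a % n := ZMod.val_natCast n a
  have key : 2 * Real.pi * Complex.I * (a : ℂ) / n
      = 2 * Real.pi * Complex.I * ((a % n : ℕ) : ℂ) / n
        + ((a / n : ℕ) : ℂ) * (2 * Real.pi * Complex.I) := by
    have hc : (a : ℂ) = n * ((a / n : ℕ) : ℂ) + ((a % n : ℕ) : ℂ) := by
      exact_mod_cast congrArg (Nat.cast : ℕ → ℂ) (Nat.div_add_mod a n).symm
    rw [hc]
    field_simp [hn0 (n := n)]
    ring_nf
  rw [key, Complex.exp_add, hv, ← Int.cast_natCast (R := ℂ) (a / n),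
    Complex.exp_int_mul_two_pi_mul_I, mul_one]

lemma e_inj (x y : ZMod n)
    (h : Complex.exp (2 * Real.pi * Complex.I * ((x.val : ℕ) : ℂ) / n)
       = Complex.exp (2 * Real.pi * Complex.I * ((y.val : ℕ) : ℂ) / n)) : x = y := by
  have hpi : (2 * (Real.pi : ℂ) * Complex.I) ≠ 0 := by
    simp [Real.pi_ne_zero, Complex.I_ne_zero]
  have hone : Complex.exp (2 * Real.pi * Complex.I
      * (((x.val : ℕ) : ℂ) - ((y.val : ℕ) : ℂ)) / n) = 1 := by
    rw [show 2 * (Real.pi : ℂ) * Complex.I * (((x.val : ℕ) : ℂ) - ((y.val : ℕ) : ℂ)) / n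
        = 2 * Real.pi * Complex.I * ((x.val : ℕ) : ℂ) / n
          - 2 * Real.pi * Complex.I * ((y.val : ℕ) : ℂ) / n by ring,
      Complex.exp_sub, h, div_self (Complex.exp_ne_zero _)]
  rw [Complex.exp_eq_one_iff] at hone
  obtain ⟨k, hk⟩ := hone
  have key : ((x.val : ℕ) : ℂ) - ((y.val : ℕ) : ℂ) = k * n := by
    rw [div_eq_iff (hn0 (n := n))] at hk
    have h7 : (2 * (Real.pi : ℂ) * Complex.I) * (((x.val : ℕ) : ℂ) - ((y.val : ℕ) : ℂ))
        = (2 * (Real.pi : ℂ) * Complex.I) * (k * n) := by linear_combination hk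
    exact mul_left_cancel₀ hpi h7
  have keyz : ((x.val : ℕ) : ℤ) - ((y.val : ℕ) : ℤ) = k * n := by exact_mod_cast key
  have hzmod : ((x.val : ℕ) : ZMod n) = ((y.val : ℕ) : ZMod n) := by
    have h8 : (((x.val : ℕ) : ℤ) : ZMod n) = (((y.val : ℕ) : ℤ) : ZMod n) := by
      have h9 : ((x.val : ℕ) : ℤ) = ((y.val : ℕ) : ℤ) + k * n := by linarith [keyz]
      rw [h9]; push_cast; simp
    exact_mod_cast h8
  rwa [ZMod.natCast_val, ZMod.natCast_val, ZMod.cast_id, ZMod.cast_id] at hzmod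

lemma Fourier_apply (j k : ZMod n) :
    Fourier n j k = ((1 / Real.sqrt n : ℝ) : ℂ) *
      Complex.exp (2 * Real.pi * Complex.I * (((j * k : ZMod n).val : ℕ) : ℂ) / n) := by
  unfold Fourier
  simp only [Matrix.of_apply]
  congr 1
  rw [show ((j.val : ℂ) * (k.val : ℂ)) = ((j.val * k.val : ℕ) : ℂ) by push_cast; ring]
  rw [exp_mod]
  congr 3
  push_cast [ZMod.natCast_val, ZMod.cast_id]
  ring

end Aux

theorem symmetric_perm_fourier_spectrally_equivalent
    (n : ℕ) [NeZero n] (M : Matrix (ZMod n) (ZMod n) ℂ)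
    (hH : IsHadamard n M) (hd : IsDephased n M) (hsym : M = Mᵀ)
    (σ ρ : Equiv.Perm (ZMod n))
    (hM : M = (permMat σ)ᵀ * Fourier n * permMat ρ) :
    ∃ m : (ZMod n)ˣ,
      M.charpoly = (Fourier n * permMat fun k => (m : ZMod n) * k).charpoly := by
  have hc : ((1 / Real.sqrt n : ℝ) : ℂ) ≠ 0 := by
    have hs : (0 : ℝ) < Real.sqrt n := Real.sqrt_pos.mpr
      (by exact_mod_cast Nat.pos_of_ne_zero (NeZero.ne n))
    exact Complex.ofReal_ne_zero.mpr (by positivity)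
  have hentry : ∀ j k, M j k = ((1 / Real.sqrt n : ℝ) : ℂ) *
      Complex.exp (2 * Real.pi * Complex.I * (((σ j * ρ k : ZMod n).val : ℕ) : ℂ) / n) := by
    intro j k
    rw [hM, conj_apply, Fourier_apply]
  have hrel : ∀ j k, σ j * ρ k = σ k * ρ j := by
    intro j k
    have h1 : M j k = M k j := by conv_lhs => rw [hsym, Matrix.transpose_apply]
    rw [hentry j k, hentry k j] at h1
    exact e_inj _ _ (mul_left_cancel₀ hc h1)
  have hρ : ∀ k, ρ k = ρ (σ⁻¹ 1) * σ k := by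
    intro k
    have h := hrel (σ⁻¹ 1) k
    rw [show σ (σ⁻¹ 1) = 1 from σ.apply_symm_apply 1, one_mul] at h
    rw [h, mul_comm]
  have hunit : ρ (σ⁻¹ 1) * σ (ρ⁻¹ 1) = 1 := by
    have h := hρ (ρ⁻¹ 1)
    rw [show ρ (ρ⁻¹ 1) = 1 from ρ.apply_symm_apply 1] at h
    exact h.symm
  refine ⟨⟨ρ (σ⁻¹ 1), σ (ρ⁻¹ 1), hunit, by rw [mul_comm]; exact hunit⟩, ?_⟩
  have hρmat : permMat ⇑ρ = permMat (fun k => ρ (σ⁻¹ 1) * k) * permMat ⇑σ := by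
    have hfun : ⇑ρ = (fun k => ρ (σ⁻¹ 1) * k) ∘ ⇑σ := funext fun k => hρ k
    rw [permMat_mul, ← hfun]
  have hQ1 : permMat ⇑σ⁻¹ * permMat ⇑σ = 1 := by
    rw [permMat_mul, show (⇑σ⁻¹ ∘ ⇑σ) = id from funext fun x => σ.symm_apply_apply x,
      permMat_id]
  have hQ2 : permMat ⇑σ * permMat ⇑σ⁻¹ = 1 := by
    rw [permMat_mul, show (⇑σ ∘ ⇑σ⁻¹) = id from funext fun x => σ.apply_symm_apply x,
      permMat_id]
  rw [hM, hρmat, permMat_transpose,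
    show permMat ⇑σ⁻¹ * Fourier n * (permMat (fun k => ρ (σ⁻¹ 1) * k) * permMat ⇑σ)
      = permMat ⇑σ⁻¹ * (Fourier n * permMat (fun k => ρ (σ⁻¹ 1) * k)) * permMat ⇑σ by
      simp only [Matrix.mul_assoc]]
  exact my_charpoly_conj _ _ _ hQ1 hQ2
end
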